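/- Let K ⊆ ℝ² be the convex hull of a finite set of points, let f : ℝ² → ℝ be an affine map, and let l₁, l₂ ∈ K be points such that K ∩ {z ∈ ℝ² | f(z) = 0} equals the segment [l₁,l₂]. Then K + [l₁,l₂] = (K ∩ {z | f(z) ≤ 0}) + (K ∩ {z | f(z) ≥ 0}), where + denotes Minkowski sum. -/
import Mathlib


open Pointwise

/-- Cutting relation for polygons: if a polygon `K` (the convex hull of a
finite set) is cut by the zero set of an affine map `f` into two pieces, and the cut
`K ∩ {f = 0}` is the segment `[l₁, l₂]`, then
`K + [l₁,l₂] = (K ∩ {f ≤ 0}) + (K ∩ {f ≥ 0})`. -/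
theorem polygon_cut_relation (P : Finset (ℝ × ℝ)) (K : Set (ℝ × ℝ))
    (hK : K = convexHull ℝ (P : Set (ℝ × ℝ)))
    (f : (ℝ × ℝ) →ᵃ[ℝ] ℝ) (l₁ l₂ : ℝ × ℝ) (hl₁ : l₁ ∈ K) (hl₂ : l₂ ∈ K)
    (hcut : K ∩ {z : ℝ × ℝ | f z = 0} = segment ℝ l₁ l₂) :
    K + segment ℝ l₁ l₂ = (K ∩ {z : ℝ × ℝ | f z ≤ 0}) + (K ∩ {z : ℝ × ℝ | 0 ≤ f z}) := by
  have hconv : Convex ℝ K := hK ▸ convex_convexHull ℝ _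
  apply Set.Subset.antisymm
  · intro a ha
    rw [Set.mem_add] at ha
    obtain ⟨k, hk, s, hs, rfl⟩ := ha
    have hsK : s ∈ K ∩ {z : ℝ × ℝ | f z = 0} := hcut ▸ hs
    rw [Set.mem_add]
    rcases le_total (f k) 0 with h | h
    · exact ⟨k, ⟨hk, h⟩, s, ⟨hsK.1, le_of_eq hsK.2.symm⟩, rfl⟩
    · exact ⟨s, ⟨hsK.1, le_of_eq hsK.2⟩, k, ⟨hk, h⟩, add_comm s k⟩
  · intro a ha
    rw [Set.mem_add] at ha
    obtain ⟨x, ⟨hxK, hx⟩, y, ⟨hyK, hy⟩, rfl⟩ := ha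
    simp only [Set.mem_setOf_eq] at hx hy
    obtain ⟨t, ht0, ht1, hft⟩ : ∃ t : ℝ, 0 ≤ t ∧ t ≤ 1 ∧
        (1 - t) * f x + t * f y = 0 := by
      by_cases h : f y - f x = 0
      · have hfx : f x = 0 := le_antisymm hx (by linarith [sub_eq_zero.mp h])
        exact ⟨0, le_refl 0, zero_le_one, by rw [hfx]; ring⟩
      · have hpos : 0 < f y - f x := lt_of_le_of_ne (by linarith) (Ne.symm h)
        refine ⟨-f x / (f y - f x), div_nonneg (by linarith) hpos.le, ?_, ?_⟩
        · rw [div_le_one hpos]; linarith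
        · field_simp
          ring
    set z : ℝ × ℝ := (1 - t) • x + t • y with hz
    have hzK : z ∈ K := hconv hxK hyK (by linarith) ht0 (by ring)
    have hfz : f z = 0 := by
      rw [hz, Convex.combo_affine_apply (by ring)]
      simpa using hft
    have hzseg : z ∈ segment ℝ l₁ l₂ := hcut ▸ ⟨hzK, hfz⟩
    have hwK : t • x + (1 - t) • y ∈ K := hconv hxK hyK ht0 (by linarith) (by ring)
    rw [Set.mem_add]
    refine ⟨t • x + (1 - t) • y, hwK, z, hzseg, ?_⟩
    rw [hz]
    module
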